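/- arXiv:1406.4537 — 2 statements merged into one kernel-verified Lean document; each statement's English description precedes it below -/
import Mathlib

section
/- For every integer k ≥ 3, one has f_{[(k+2)/2]}([(k+1)/2] − 1) ≥ f_{[(k+1)/2]}([k/2]). -/
noncomputable section

open Real Filter

/-- `fseq 0 x = 1`, `fseq 1 x = 8 ^ x`, and `fseq (k+1) = fseq k ∘ fseq 1` for `k ≥ 1`. -/
noncomputable def fseq : ℕ → ℝ → ℝ
  | 0, _ => 1
  | 1, x => (8 : ℝ) ^ x
  | (k+2), x => fseq (k+1) ((8 : ℝ) ^ x)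

/-- `u₀ = 3(d-1)/(L₀ log(1/κ))`. -/
noncomputable def u0 (d : ℕ) (L₀ κ : ℝ) : ℝ := 3 * ((d : ℝ) - 1) / (L₀ * Real.log (1 / κ))

/-- `u_k = u₀ v^{-k}` with `v = 8`. -/
noncomputable def useq (d : ℕ) (L₀ κ : ℝ) (k : ℕ) : ℝ := u0 d L₀ κ / 8 ^ k

/-- The chosen scales `N_k = (α c₁/u₀) f_{[(k+2)/2]}([(k+1)/2]) / f_{[(k+1)/2]}([k/2])`,
with `α = 240`. -/
noncomputable def Nscale (c₁ u₀ : ℝ) (k : ℕ) : ℝ :=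
  (240 * c₁ / u₀) * fseq ((k+2)/2) (((k+1)/2 : ℕ) : ℝ) / fseq ((k+1)/2) ((k/2 : ℕ) : ℝ)

/-- The chosen scales `L_k = f_{[(k+1)/2]}([k/2]) (α c₁/u₀)^k L₀`. -/
noncomputable def Lscale (c₁ u₀ L₀ : ℝ) (k : ℕ) : ℝ :=
  fseq ((k+1)/2) ((k/2 : ℕ) : ℝ) * (240 * c₁ / u₀) ^ k * L₀

/-- The transversal scales `L̃_0 = L̃₀`, `L̃_{k+1} = N_k³ L̃_k`. -/
noncomputable def Ltscale (c₁ u₀ Lt₀ : ℝ) : ℕ → ℝ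
  | 0 => Lt₀
  | (k+1) => (Nscale c₁ u₀ k) ^ 3 * Ltscale c₁ u₀ Lt₀ k


lemma fseq_mono : ∀ n, Monotone (fseq n)
  | 0 => monotone_const
  | 1 => fun _ _ hxy => Real.rpow_le_rpow_of_exponent_le (by norm_num) hxy
  | (n+2) => fun _ _ hxy =>
      fseq_mono (n+1) (Real.rpow_le_rpow_of_exponent_le (by norm_num) hxy)

/-- For every integer `k ≥ 3`, `f_{[(k+2)/2]}([(k+1)/2] - 1) ≥ f_{[(k+1)/2]}([k/2])`. -/
theorem fseq_shift_ge (k : ℕ) (hk : 3 ≤ k) :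
    fseq ((k + 1) / 2) ((k / 2 : ℕ) : ℝ) ≤
      fseq ((k + 2) / 2) ((((k + 1) / 2 - 1 : ℕ) : ℝ)) := by
  rcases Nat.even_or_odd k with ⟨m, hm⟩ | ⟨m, hm⟩
  · -- k = 2m, m ≥ 2
    obtain ⟨j, rfl⟩ : ∃ j, m = j + 2 := ⟨m - 2, by omega⟩
    have h1 : (k + 1) / 2 = j + 2 := by omega
    have h2 : k / 2 = j + 2 := by omega
    have h3 : (k + 2) / 2 = j + 3 := by omega
    have h4 : (k + 1) / 2 - 1 = j + 1 := by omega
    rw [h1, h2, h3, show (j + 2) - 1 = j + 1 from rfl]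
    show fseq (j+2) _ ≤ fseq (j+2) ((8:ℝ) ^ ((j+1 : ℕ) : ℝ))
    apply fseq_mono
    rw [Real.rpow_natCast]
    have hn : (j + 2 : ℕ) ≤ 8 ^ (j + 1) :=
      le_trans (Nat.lt_two_pow_self (n := j+1)) (Nat.pow_le_pow_left (by norm_num) _)
    exact_mod_cast hn
  · -- k = 2m+1
    have h1 : (k + 1) / 2 = m + 1 := by omega
    have h2 : (k + 2) / 2 = m + 1 := by omega
    have h3 : (k + 1) / 2 - 1 = k / 2 := by omega
    rw [h1, h2, show (m + 1) - 1 = m from rfl, show k / 2 = m by omega]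
end
end

section
/- There exists a constant c₁₁ depending only on d and κ such that whenever L₀ ≥ c₁₁, the chosen scales satisfy, for all k ≥ 0, L_{k+1}^{3d−1} · κ^{u_{k+1} L_{k+1}/3} ≤ 1. -/
noncomputable section

open Real Filter

lemma one_le_fseq : ∀ (m : ℕ) (x : ℝ), 0 ≤ x → 1 ≤ fseq m x
  | 0, x, _ => by simp [fseq]
  | 1, x, hx => by
      show (1:ℝ) ≤ (8:ℝ) ^ x
      exact Real.one_le_rpow (by norm_num) hx
  | (k+2), x, _ => by
      show 1 ≤ fseq (k+1) ((8:ℝ) ^ x)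
      exact one_le_fseq (k+1) _ (Real.rpow_nonneg (by norm_num) x)

set_option maxHeartbeats 1000000 in
/-- There is a constant `c₁₁ = c₁₁(d,κ)` such that for `L₀ ≥ c₁₁` the chosen scales satisfy
`L_{k+1}^{3d-1} κ^{u_{k+1} L_{k+1}/3} ≤ 1` for all `k ≥ 0`. -/
theorem Lscale_kappa_bound (d : ℕ) (hd : 2 ≤ d) (κ : ℝ) (hκ0 : 0 < κ) (hκ1 : κ < 1) :
    ∃ c₁₁ : ℝ, ∀ L₀ : ℝ, c₁₁ ≤ L₀ → ∀ k : ℕ,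
      (Lscale (Real.sqrt d) (u0 d L₀ κ) L₀ (k + 1)) ^ (3 * d - 1) *
          κ ^ (useq d L₀ κ (k + 1) * Lscale (Real.sqrt d) (u0 d L₀ κ) L₀ (k + 1) / 3) ≤ 1 := by
  have hd2 : (2:ℝ) ≤ (d:ℝ) := by exact_mod_cast hd
  have hd1 : (1:ℝ) ≤ (d:ℝ) - 1 := by linarith
  have hlogκ : Real.log κ < 0 := Real.log_neg hκ0 hκ1
  set t : ℝ := -Real.log κ with ht_def
  have ht : 0 < t := by rw [ht_def]; linarith
  have hsd : (1:ℝ) ≤ Real.sqrt d := by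
    rw [show (1:ℝ) = Real.sqrt 1 by simp]
    exact Real.sqrt_le_sqrt (by linarith)
  have hsd0 : (0:ℝ) < Real.sqrt d := by linarith
  set K : ℝ := ((d:ℝ) - 1) / (10 * Real.sqrt d * t) with hK_def
  have hK : 0 < K := by
    apply div_pos (by linarith) (by positivity)
  set M : ℝ := |Real.log K| with hM_def
  have hM : 0 ≤ M := abs_nonneg _
  set R₀ : ℝ := 10000 + 15 * M with hR₀_def
  clear_value t K M R₀
  have hR₀pos : 0 < R₀ := by rw [hR₀_def]; linarith
  refine ⟨K * R₀, fun L₀ hL₀ k => ?_⟩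
  have hL₀pos : 0 < L₀ := lt_of_lt_of_le (mul_pos hK hR₀pos) hL₀
  set R : ℝ := 10 * Real.sqrt d * t * L₀ / ((d:ℝ) - 1) with hR_def
  clear_value R
  have hd1ne : ((d:ℝ) - 1) ≠ 0 := by linarith
  have hKR : L₀ = K * R := by
    rw [hK_def, hR_def]
    field_simp
  have hRR₀ : R₀ ≤ R := by
    rw [hKR] at hL₀
    exact le_of_mul_le_mul_left hL₀ hK
  have hR10000 : (10000:ℝ) ≤ R := by
    have : 10000 ≤ R₀ := by rw [hR₀_def]; linarith
    linarith
  have hR1 : (1:ℝ) ≤ R := by linarith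
  have hR2 : (2:ℝ) ≤ R := by linarith
  have hRpos : (0:ℝ) < R := by linarith
  have hlog1κ : Real.log (1/κ) = t := by rw [one_div, Real.log_inv, ht_def]
  have hu0 : u0 d L₀ κ = 3 * ((d:ℝ)-1) / (L₀ * t) := by rw [u0, hlog1κ]
  have hu0pos : 0 < u0 d L₀ κ := by rw [hu0]; positivity
  have hB : 240 * Real.sqrt (d:ℝ) / u0 d L₀ κ = 8 * R := by
    rw [hu0, hR_def]
    field_simp
    ring
  set G : ℝ := fseq ((k+1+1)/2) (((k+1)/2 : ℕ) : ℝ) with hG_def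
  clear_value G
  have hG : 1 ≤ G := by rw [hG_def]; exact one_le_fseq _ _ (by positivity)
  have hL_eq : Lscale (Real.sqrt d) (u0 d L₀ κ) L₀ (k+1) = G * (8*R)^(k+1) * L₀ := by
    rw [Lscale, hB, hG_def]
  have hLpos : 0 < Lscale (Real.sqrt d) (u0 d L₀ κ) L₀ (k+1) := by
    rw [hL_eq]; positivity
  -- the exponent on κ times t
  have het : useq d L₀ κ (k+1) * Lscale (Real.sqrt d) (u0 d L₀ κ) L₀ (k+1) / 3 * t
      = ((d:ℝ)-1) * G * R^(k+1) := by
    rw [hL_eq, useq, hu0]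
    field_simp
    ring
  -- log of L
  have hlogL : Real.log (Lscale (Real.sqrt d) (u0 d L₀ κ) L₀ (k+1))
      = Real.log G + ((k:ℝ)+1) * (Real.log 8 + Real.log R) + (Real.log K + Real.log R) := by
    rw [hL_eq]
    rw [Real.log_mul (by positivity) (ne_of_gt hL₀pos),
        Real.log_mul (by positivity) (by positivity),
        Real.log_pow, Real.log_mul (by norm_num) (ne_of_gt hRpos)]
    rw [hKR, Real.log_mul (ne_of_gt hK) (ne_of_gt hRpos)]
    push_cast
    ring
  -- elementary bounds
  have hGpos : (0:ℝ) < G := by linarith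
  have hlogG : Real.log G ≤ G := by
    have := Real.log_le_sub_one_of_pos hGpos; linarith
  have hlog8 : Real.log 8 ≤ 7 := by
    have := Real.log_le_sub_one_of_pos (show (0:ℝ) < 8 by norm_num); linarith
  have hlog8nn : (0:ℝ) ≤ Real.log 8 := Real.log_nonneg (by norm_num)
  have hlogRnn : (0:ℝ) ≤ Real.log R := Real.log_nonneg hR1
  have hlogK : Real.log K ≤ M := by rw [hM_def]; exact le_abs_self _
  set sR : ℝ := Real.sqrt R with hsR_def
  have hsR : (100:ℝ) ≤ sR := by
    rw [hsR_def, show (100:ℝ) = Real.sqrt 10000 by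
      rw [show (10000:ℝ) = 100^2 by norm_num, Real.sqrt_sq (by norm_num)]]
    exact Real.sqrt_le_sqrt hR10000
  have hsRsq : sR * sR = R := Real.mul_self_sqrt (le_of_lt hRpos)
  have hlogR : Real.log R ≤ 2 * sR := by
    have h1 : Real.log sR = Real.log R / 2 := Real.log_sqrt (le_of_lt hRpos)
    have h2 := Real.log_le_sub_one_of_pos (show (0:ℝ) < sR by linarith)
    linarith
  have hk2 : ((k:ℝ) + 2) ≤ 2 * 2^k := by
    have h : (k + 2 : ℕ) ≤ 2^(k+1) := Nat.succ_le_of_lt (Nat.lt_two_pow_self (n := k+1))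
    calc ((k:ℝ)+2) = ((k+2 : ℕ):ℝ) := by push_cast; ring
    _ ≤ ((2^(k+1) : ℕ):ℝ) := by exact_mod_cast h
    _ = 2 * 2^k := by push_cast; ring
  have h2R : (2:ℝ)^k ≤ R^k := pow_le_pow_left₀ (by norm_num) hR2 k
  have hRk : R ≤ R^(k+1) := le_self_pow₀ hR1 (Nat.succ_ne_zero k)
  have hRkpos : (0:ℝ) < R^(k+1) := by positivity
  have hR15 : (15:ℝ) ≤ R^(k+1) := by linarith
  -- piece 2
  have hc2 : 15*((k:ℝ)+2)*(7 + Real.log R) ≤ R^(k+1) := by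
    have hsRnn : (0:ℝ) ≤ sR := Real.sqrt_nonneg R
    have h100 : 100 * sR ≤ R := by
      have := mul_le_mul_of_nonneg_right hsR hsRnn
      linarith [hsRsq]
    have key : 30 * (7 + 2*sR) ≤ R := by linarith
    have h1 : 15*((k:ℝ)+2)*(7+Real.log R) ≤ 15*((k:ℝ)+2)*(7+2*sR) := by
      apply mul_le_mul_of_nonneg_left (by linarith) (by positivity)
    have h3 : (((k:ℝ)+2)/2) * (30*(7+2*sR)) ≤ 2^k * R := by
      apply mul_le_mul (by linarith) key (by positivity) (by positivity)
    have h4 : (2:ℝ)^k * R ≤ R^k * R := by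
      apply mul_le_mul_of_nonneg_right h2R (le_of_lt hRpos)
    have h5 : R^k * R = R^(k+1) := by ring
    have h2 : 15*((k:ℝ)+2)*(7+2*sR) = (((k:ℝ)+2)/2) * (30*(7+2*sR)) := by ring
    linarith
  have hGRk : R^(k+1) ≤ G * R^(k+1) := le_mul_of_one_le_left (le_of_lt hRkpos) hG
  have hc1 : 15 * G ≤ G * R^(k+1) := by
    have := mul_le_mul_of_nonneg_left hR15 (le_of_lt hGpos)
    linarith
  have hc3 : 15 * M ≤ R^(k+1) := by
    have : 15 * M ≤ R₀ := by rw [hR₀_def]; linarith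
    linarith
  have hS : 15*(G + ((k:ℝ)+2)*(7+Real.log R) + M) ≤ 3 * (G * R^(k+1)) := by linarith
  -- main inequality
  have hX : Real.log (Lscale (Real.sqrt d) (u0 d L₀ κ) L₀ (k+1))
      ≤ G + ((k:ℝ)+2)*(7+Real.log R) + M := by
    rw [hlogL]
    have h7 : ((k:ℝ)+1) * (Real.log 8 + Real.log R) + Real.log R
        ≤ ((k:ℝ)+2)*(7+Real.log R) := by
      have := mul_le_mul_of_nonneg_left
        (show Real.log 8 + Real.log R ≤ 7 + Real.log R by linarith)
        (show (0:ℝ) ≤ (k:ℝ)+1 by positivity)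
      have e1 : ((k:ℝ)+2)*(7+Real.log R) = ((k:ℝ)+1)*(7+Real.log R) + (7+Real.log R) := by ring
      linarith
    linarith
  have hSnn : (0:ℝ) ≤ G + ((k:ℝ)+2)*(7+Real.log R) + M := by
    have : (0:ℝ) ≤ ((k:ℝ)+2)*(7+Real.log R) := mul_nonneg (by positivity) (by linarith)
    linarith
  have hmain : (3*(d:ℝ)-1) * Real.log (Lscale (Real.sqrt d) (u0 d L₀ κ) L₀ (k+1))
      ≤ ((d:ℝ)-1) * G * R^(k+1) := by
    calc (3*(d:ℝ)-1) * Real.log (Lscale (Real.sqrt d) (u0 d L₀ κ) L₀ (k+1))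
        ≤ (3*(d:ℝ)-1) * (G + ((k:ℝ)+2)*(7+Real.log R) + M) :=
          mul_le_mul_of_nonneg_left hX (by linarith)
      _ ≤ 5*((d:ℝ)-1) * (G + ((k:ℝ)+2)*(7+Real.log R) + M) :=
          mul_le_mul_of_nonneg_right (by linarith) hSnn
      _ = ((d:ℝ)-1) * (5 * (G + ((k:ℝ)+2)*(7+Real.log R) + M)) := by ring
      _ ≤ ((d:ℝ)-1) * (G * R^(k+1)) :=
          mul_le_mul_of_nonneg_left (by linarith) (by linarith)
      _ = ((d:ℝ)-1) * G * R^(k+1) := by ring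
  -- cast of the natural exponent
  have hcast : ((3*d-1 : ℕ):ℝ) = 3*(d:ℝ)-1 := by
    have h13 : 1 ≤ 3*d := by omega
    push_cast [Nat.cast_sub h13]
    ring
  -- reduce to exponentials
  have hLexp : (Lscale (Real.sqrt d) (u0 d L₀ κ) L₀ (k+1)) ^ (3*d-1)
      = Real.exp (((3*d-1:ℕ):ℝ) * Real.log (Lscale (Real.sqrt d) (u0 d L₀ κ) L₀ (k+1))) := by
    rw [Real.exp_nat_mul, Real.exp_log hLpos]
  rw [hLexp, Real.rpow_def_of_pos hκ0, ← Real.exp_add]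
  rw [Real.exp_le_one_iff]
  have hlogκt : Real.log κ = -t := by rw [ht_def]; ring
  rw [hcast, hlogκt]
  have h9 : -t * (useq d L₀ κ (k + 1) * Lscale (Real.sqrt (d:ℝ)) (u0 d L₀ κ) L₀ (k + 1) / 3)
      = -(((d:ℝ)-1) * G * R^(k+1)) := by rw [← het]; ring
  rw [h9]
  linarith [hmain]
end
end
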